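/- Let p ∈ (1,∞), q = p/(p−1), A ∈ ℂ^{d×d} with conjugate transpose A*, and b, c ∈ ℂ^d. Then for every ξ ∈ ℂ^d: Re⟨A*ξ, 𝒥_q ξ⟩ = Re⟨A(𝒥_q ξ), 𝒥_p(𝒥_q ξ)⟩ and Re⟨c + 𝒥_q b, ξ⟩ = Re⟨b + 𝒥_p c, 𝒥_q ξ⟩. -/

import Mathlib

open scoped ComplexConjugate

/-- The ℝ-linear operator `𝒥_p ξ = (p/2)(ξ + (1 − 2/p)·conj ξ)` on `ℂ^d`. -/
noncomputable def Jmap (p : ℝ) {d : ℕ} (ξ : EuclideanSpace ℂ (Fin d)) :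
    EuclideanSpace ℂ (Fin d) :=
  WithLp.toLp 2 (fun i => (p / 2 : ℂ) * (ξ i + ((1 - 2 / p : ℝ) : ℂ) * conj (ξ i)))

/-- The Hermitian inner product `⟨x,y⟩ = ∑ x i * conj (y i)`, linear in the first variable. -/
noncomputable def hip {d : ℕ} (x y : EuclideanSpace ℂ (Fin d)) : ℂ :=
  @inner ℂ _ _ y x

/-- A matrix acting on `ℂ^d`. -/
noncomputable def mulVecE {d : ℕ} (A : Matrix (Fin d) (Fin d) ℂ)
    (ξ : EuclideanSpace ℂ (Fin d)) : EuclideanSpace ℂ (Fin d) :=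
  WithLp.toLp 2 (fun i => A.mulVec (fun j => ξ j) i)

/-- `Γ_p^{(A,b,c,V)}(ξ) = Re⟨Aξ, 𝒥_p ξ⟩ + Re⟨b + 𝒥_p c, ξ⟩ + V`. -/
noncomputable def Gamma (p : ℝ) {d : ℕ} (A : Matrix (Fin d) (Fin d) ℂ)
    (b c : EuclideanSpace ℂ (Fin d)) (V : ℝ) (ξ : EuclideanSpace ℂ (Fin d)) : ℝ :=
  (hip (mulVecE A ξ) (Jmap p ξ)).re + (hip (b + Jmap p c) ξ).re + V

lemma hip_eq {d : ℕ} (x y : EuclideanSpace ℂ (Fin d)) :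
    hip x y = ∑ i, conj (y i) * x i := by
  simp [hip, PiLp.inner_apply, RCLike.inner_apply]
  exact Finset.sum_congr rfl fun _ _ => mul_comm _ _

-- J_p (J_q ξ) = ξ
lemma Jmap_Jmap {d : ℕ} (p q : ℝ) (hp : 1 < p) (hq : q = p / (p - 1))
    (ξ : EuclideanSpace ℂ (Fin d)) : Jmap p (Jmap q ξ) = ξ := by
  subst hq
  have h1 : (p : ℂ) ≠ 0 := by exact_mod_cast ne_of_gt (by linarith : (0:ℝ) < p)
  have h2 : ((p : ℂ) - 1) ≠ 0 := by
    have h : (p - 1 : ℝ) ≠ 0 := by linarith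
    have := (Complex.ofReal_ne_zero).2 h
    push_cast at this; exact this
  ext i
  show (p / 2 : ℂ) * ((Jmap _ ξ) i + _ * conj ((Jmap _ ξ) i)) = ξ i
  simp only [Jmap, PiLp.toLp_apply, map_mul, map_add, map_div₀, map_ofNat, Complex.conj_conj, Complex.conj_ofReal]
  push_cast
  have h3 : ((p:ℂ) ^ 3 * 8 - (p:ℂ) ^ 4 * 16 + (p:ℂ) ^ 5 * 8) ≠ 0 := by
    have he : ((p:ℂ) ^ 3 * 8 - (p:ℂ) ^ 4 * 16 + (p:ℂ) ^ 5 * 8)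
        = 8 * (p:ℂ) ^ 3 * ((p:ℂ) - 1) ^ 2 := by ring
    rw [he]
    exact mul_ne_zero (mul_ne_zero (by norm_num) (pow_ne_zero _ h1)) (pow_ne_zero _ h2)
  field_simp
  ring_nf

-- Re⟨J_r x, y⟩ = Re⟨x, J_r y⟩
lemma re_hip_Jmap {d : ℕ} (r : ℝ) (x y : EuclideanSpace ℂ (Fin d)) :
    (hip (Jmap r x) y).re = (hip x (Jmap r y)).re := by
  rw [hip_eq, hip_eq, Complex.re_sum, Complex.re_sum]
  refine Finset.sum_congr rfl fun i _ => ?_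
  simp only [Jmap, PiLp.toLp_apply, map_mul, map_add, map_div₀, map_ofNat, Complex.conj_conj,
    Complex.conj_ofReal]
  simp [Complex.mul_re, Complex.mul_im, Complex.add_re, Complex.add_im,
    Complex.div_re, Complex.div_im, Complex.conj_re, Complex.conj_im,
    Complex.ofReal_re, Complex.ofReal_im]
  ring

-- Re⟨Aᴴ x, y⟩ = Re⟨A y, x⟩
lemma re_hip_conjTranspose {d : ℕ} (A : Matrix (Fin d) (Fin d) ℂ)
    (x y : EuclideanSpace ℂ (Fin d)) :
    (hip (mulVecE A.conjTranspose x) y).re = (hip (mulVecE A y) x).re := by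
  have key : hip (mulVecE A.conjTranspose x) y = conj (hip (mulVecE A y) x) := by
    rw [hip_eq, hip_eq, map_sum]
    simp only [mulVecE, PiLp.toLp_apply, Matrix.mulVec, dotProduct, Matrix.conjTranspose_apply,
      Finset.mul_sum, map_sum, map_mul, Complex.conj_conj]
    rw [Finset.sum_comm]
    refine Finset.sum_congr rfl fun i _ => Finset.sum_congr rfl fun j _ => ?_
    rw [show star (A i j) = conj (A i j) from rfl]
    ring
  rw [key, Complex.conj_re]

theorem stmt7 (d : ℕ) (hd : 1 ≤ d) (p q : ℝ) (hp : 1 < p) (hq : q = p / (p - 1))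
    (A : Matrix (Fin d) (Fin d) ℂ) (b c : EuclideanSpace ℂ (Fin d)) :
    ∀ ξ : EuclideanSpace ℂ (Fin d),
      (hip (mulVecE A.conjTranspose ξ) (Jmap q ξ)).re =
        (hip (mulVecE A (Jmap q ξ)) (Jmap p (Jmap q ξ))).re ∧
      (hip (c + Jmap q b) ξ).re = (hip (b + Jmap p c) (Jmap q ξ)).re := by
  intro ξ
  have hJ : Jmap p (Jmap q ξ) = ξ := Jmap_Jmap p q hp hq ξ
  constructor
  · rw [hJ]; exact re_hip_conjTranspose A ξ (Jmap q ξ)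
  · have hadd : ∀ u v w : EuclideanSpace ℂ (Fin d),
        hip (u + v) w = hip u w + hip v w := fun u v w => by
      simp [hip, inner_add_right]
    rw [hadd, hadd, Complex.add_re, Complex.add_re,
      re_hip_Jmap q b ξ, re_hip_Jmap p c (Jmap q ξ), hJ, add_comm]
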